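/- Let γ > 1, κ > 0 and ρ̄ > 0. Then the function θ₂ : (0,∞) → ℝ defined by θ₂(ρ) = (2√(κγ)/(γ−1))·ρ·(ρ^{(γ−1)/2} − ρ̄^{(γ−1)/2}) for ρ ≤ ρ̄ (rarefaction branch) and θ₂(ρ) = √((ρ/ρ̄)·(ρ − ρ̄)·(κρ^γ − κρ̄^γ)) for ρ > ρ̄ (shock branch) is continuously differentiable on (0,∞), and its derivative at ρ̄ equals c̄ = √(κγρ̄^{γ−1}). -/

import Mathlib

/-- The piecewise function θ₂ of model M2 is continuously
differentiable on (0,∞), and its derivative at ρ̄ equals the sound speed c̄. -/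
theorem theta2_contDiffOn_and_deriv
    (γ κ ρbar cbar : ℝ) (hγ : 1 < γ) (hκ : 0 < κ) (hρbar : 0 < ρbar)
    (hc : cbar = Real.sqrt (κ * γ * ρbar ^ (γ - 1)))
    (θ₂ : ℝ → ℝ)
    (hθ : ∀ ρ : ℝ, θ₂ ρ =
      if ρ ≤ ρbar then
        (2 * Real.sqrt (κ * γ) / (γ - 1)) * ρ * (ρ ^ ((γ - 1) / 2) - ρbar ^ ((γ - 1) / 2))
      else Real.sqrt ((ρ / ρbar) * (ρ - ρbar) * (κ * ρ ^ γ - κ * ρbar ^ γ))) :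
    ContDiffOn ℝ 1 θ₂ (Set.Ioi (0 : ℝ)) ∧ HasDerivAt θ₂ cbar ρbar := by
  classical
  have hγ0 : (0:ℝ) < γ := lt_trans one_pos hγ
  have hγ1 : (0:ℝ) < γ - 1 := sub_pos.2 hγ
  have hκγ : (0:ℝ) < κ * γ := mul_pos hκ hγ0
  have hcbar_pos : 0 < cbar := by
    rw [hc]; exact Real.sqrt_pos.2 (by positivity)
  have hcsq : cbar ^ 2 = κ * γ * ρbar ^ (γ - 1) := by
    rw [hc]; exact Real.sq_sqrt (by positivity)
  -- rarefaction branch: derivative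
  have hD1 : ∀ ρ : ℝ, 0 < ρ →
      HasDerivAt (fun x : ℝ => (2 * Real.sqrt (κ * γ) / (γ - 1)) * x * (x ^ ((γ-1)/2) - ρbar ^ ((γ-1)/2)))
        ((2 * Real.sqrt (κ * γ) / (γ - 1)) * ((1 + (γ-1)/2) * ρ ^ ((γ-1)/2) - ρbar ^ ((γ-1)/2))) ρ := by
    intro ρ hρ
    set A : ℝ := 2 * Real.sqrt (κ * γ) / (γ - 1)
    set e : ℝ := (γ-1)/2 with he_def
    have h1 : HasDerivAt (fun x : ℝ => x ^ e) (e * ρ ^ (e - 1)) ρ :=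
      Real.hasDerivAt_rpow_const (Or.inl hρ.ne')
    have h2 : HasDerivAt (fun x : ℝ => A * x) A ρ := by
      simpa using (hasDerivAt_id ρ).const_mul A
    have h3 := h2.mul (h1.sub_const (ρbar ^ e))
    have key : ρ * ρ ^ (e - 1) = ρ ^ e := by
      have h := Real.rpow_add hρ 1 (e - 1)
      simp only [Real.rpow_one] at h
      rw [← h]; congr 1; ring
    refine h3.congr_deriv ?_
    rw [← key]; ring
  -- value of this derivative at ρbar is cbar
  have hρbar_e : ρbar ^ ((γ-1)/2) = Real.sqrt (ρbar ^ (γ - 1)) := by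
    rw [Real.sqrt_eq_rpow, ← Real.rpow_mul hρbar.le]
    congr 1; ring
  have hD1bar : (2 * Real.sqrt (κ * γ) / (γ - 1)) * ((1 + (γ-1)/2) * ρbar ^ ((γ-1)/2) - ρbar ^ ((γ-1)/2)) = cbar := by
    have hne : γ - 1 ≠ 0 := ne_of_gt hγ1
    rw [hc, Real.sqrt_mul hκγ.le, ← hρbar_e]
    field_simp
    ring
  -- splitting of the sqrt on the shock side
  have hsplit : ∀ ρ : ℝ, ρbar < ρ → θ₂ ρ =
      Real.sqrt (ρ/ρbar) * Real.sqrt (ρ - ρbar) * Real.sqrt (κ*ρ^γ - κ*ρbar^γ) := by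
    intro ρ h
    have h1 : (0:ℝ) ≤ ρ/ρbar := div_nonneg (le_of_lt (hρbar.trans h)) hρbar.le
    have h2 : (0:ℝ) ≤ ρ - ρbar := by linarith
    rw [hθ ρ, if_neg (not_le.2 h), Real.sqrt_mul (mul_nonneg h1 h2), Real.sqrt_mul h1]
  -- shock branch: derivative
  have hD2 : ∀ ρ : ℝ, ρbar < ρ → HasDerivAt θ₂
      (1/ρbar/(2*Real.sqrt (ρ/ρbar)) * (ρ - ρbar) * Real.sqrt (κ * ((ρ^γ - ρbar^γ)/(ρ - ρbar)))
        + Real.sqrt (ρ/ρbar) * Real.sqrt (κ * ((ρ^γ - ρbar^γ)/(ρ - ρbar))) / 2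
        + Real.sqrt (ρ/ρbar) * (κ * (γ * ρ^(γ-1))) / (2 * Real.sqrt (κ * ((ρ^γ - ρbar^γ)/(ρ - ρbar))))) ρ := by
    intro ρ h
    have hρ0 : 0 < ρ := hρbar.trans h
    have hv : 0 < ρ - ρbar := sub_pos.2 h
    have hvρ : 0 < ρ / ρbar := div_pos hρ0 hρbar
    have hpow : ρbar ^ γ < ρ ^ γ := Real.rpow_lt_rpow hρbar.le h hγ0
    have hw : 0 < κ*ρ^γ - κ*ρbar^γ := by nlinarith
    have hq : 0 < (ρ^γ - ρbar^γ)/(ρ - ρbar) := div_pos (by linarith) hv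
    have ha : HasDerivAt (fun x : ℝ => Real.sqrt (x/ρbar)) (1/ρbar / (2*Real.sqrt (ρ/ρbar))) ρ :=
      ((hasDerivAt_id ρ).div_const ρbar).sqrt hvρ.ne'
    have hb : HasDerivAt (fun x : ℝ => Real.sqrt (x - ρbar)) (1 / (2*Real.sqrt (ρ - ρbar))) ρ :=
      ((hasDerivAt_id ρ).sub_const ρbar).sqrt hv.ne'
    have hcin : HasDerivAt (fun x : ℝ => κ * x ^ γ - κ * ρbar ^ γ) (κ * (γ * ρ^(γ-1))) ρ :=
      ((Real.hasDerivAt_rpow_const (Or.inl hρ0.ne')).const_mul κ).sub_const (κ * ρbar ^ γ)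
    have hcc : HasDerivAt (fun x : ℝ => Real.sqrt (κ * x ^ γ - κ * ρbar ^ γ))
        ((κ * (γ * ρ^(γ-1))) / (2 * Real.sqrt (κ*ρ^γ - κ*ρbar^γ))) ρ := hcin.sqrt hw.ne'
    have hprod := (ha.mul hb).mul hcc
    have hev : θ₂ =ᶠ[nhds ρ] (fun x => Real.sqrt (x/ρbar) * Real.sqrt (x - ρbar) * Real.sqrt (κ*x^γ - κ*ρbar^γ)) := by
      filter_upwards [Ioi_mem_nhds h] with x hx
      exact hsplit x hx
    have hmain := hprod.congr_of_eventuallyEq hev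
    refine hmain.congr_deriv ?_
    simp only [Pi.mul_apply]
    have hwfac : κ*ρ^γ - κ*ρbar^γ = (ρ - ρbar) * (κ * ((ρ^γ - ρbar^γ)/(ρ - ρbar))) := by
      field_simp
    rw [hwfac, Real.sqrt_mul hv.le]
    set a := Real.sqrt (ρ/ρbar) with ha_def
    set b := Real.sqrt (ρ - ρbar) with hb_def
    set P := Real.sqrt (κ * ((ρ^γ - ρbar^γ)/(ρ - ρbar))) with hP_def
    have ha0 : 0 < a := Real.sqrt_pos.2 hvρ
    have hb0 : 0 < b := Real.sqrt_pos.2 hv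
    have hP0 : 0 < P := Real.sqrt_pos.2 (mul_pos hκ hq)
    have hb2 : b * b = ρ - ρbar := Real.mul_self_sqrt hv.le
    rw [← hb2]
    field_simp
  -- difference quotient of x ^ γ
  have hslope : Filter.Tendsto (fun ρ => (ρ^γ - ρbar^γ)/(ρ - ρbar)) (nhdsWithin ρbar (Set.Ioi ρbar))
      (nhds (γ * ρbar^(γ-1))) := by
    have h : HasDerivAt (fun x : ℝ => x ^ γ) (γ * ρbar ^ (γ-1)) ρbar :=
      Real.hasDerivAt_rpow_const (Or.inl hρbar.ne')
    have h' := hasDerivAt_iff_tendsto_slope.1 h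
    have h2 := h'.mono_left (nhdsWithin_mono ρbar (fun y hy => ne_of_gt hy))
    exact h2.congr (fun y => by rw [slope_def_field])
  have ha_lim : Filter.Tendsto (fun ρ : ℝ => Real.sqrt (ρ/ρbar)) (nhdsWithin ρbar (Set.Ioi ρbar)) (nhds 1) := by
    have : Filter.Tendsto (fun ρ : ℝ => Real.sqrt (ρ/ρbar)) (nhds ρbar) (nhds (Real.sqrt (ρbar/ρbar))) :=
      (Real.continuous_sqrt.comp (continuous_id.div_const ρbar)).continuousAt
    rw [div_self hρbar.ne', Real.sqrt_one] at this
    exact this.mono_left nhdsWithin_le_nhds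
  have hP_lim : Filter.Tendsto (fun ρ : ℝ => Real.sqrt (κ * ((ρ^γ - ρbar^γ)/(ρ - ρbar))))
      (nhdsWithin ρbar (Set.Ioi ρbar)) (nhds cbar) := by
    have := (Real.continuous_sqrt.tendsto _).comp (hslope.const_mul κ)
    have hval : Real.sqrt (κ * (γ * ρbar^(γ-1))) = cbar := by
      rw [hc]; congr 1; ring
    rw [hval] at this
    exact this
  -- limit of the shock-branch derivative from the right
  have hE_lim : Filter.Tendsto (fun ρ : ℝ =>
      1/ρbar/(2*Real.sqrt (ρ/ρbar)) * (ρ - ρbar) * Real.sqrt (κ * ((ρ^γ - ρbar^γ)/(ρ - ρbar)))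
        + Real.sqrt (ρ/ρbar) * Real.sqrt (κ * ((ρ^γ - ρbar^γ)/(ρ - ρbar))) / 2
        + Real.sqrt (ρ/ρbar) * (κ * (γ * ρ^(γ-1))) / (2 * Real.sqrt (κ * ((ρ^γ - ρbar^γ)/(ρ - ρbar)))))
      (nhdsWithin ρbar (Set.Ioi ρbar)) (nhds cbar) := by
    have hv_lim : Filter.Tendsto (fun ρ : ℝ => ρ - ρbar) (nhdsWithin ρbar (Set.Ioi ρbar)) (nhds 0) := by
      have : Filter.Tendsto (fun ρ : ℝ => ρ - ρbar) (nhds ρbar) (nhds (ρbar - ρbar)) :=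
        (continuous_id.sub continuous_const).continuousAt
      rw [sub_self] at this
      exact this.mono_left nhdsWithin_le_nhds
    have hpow_lim : Filter.Tendsto (fun ρ : ℝ => κ * (γ * ρ^(γ-1))) (nhdsWithin ρbar (Set.Ioi ρbar))
        (nhds (κ * (γ * ρbar^(γ-1)))) := by
      have h1 : ContinuousAt (fun x : ℝ => x ^ (γ-1)) ρbar :=
        Real.continuousAt_rpow_const ρbar (γ-1) (Or.inl hρbar.ne')
      exact (((h1.tendsto.const_mul γ).const_mul κ)).mono_left nhdsWithin_le_nhds
    have t1 : Filter.Tendsto (fun ρ : ℝ => 1/ρbar/(2*Real.sqrt (ρ/ρbar)) * (ρ - ρbar) * Real.sqrt (κ * ((ρ^γ - ρbar^γ)/(ρ - ρbar))))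
        (nhdsWithin ρbar (Set.Ioi ρbar)) (nhds (1/ρbar/(2*1) * 0 * cbar)) :=
      ((tendsto_const_nhds.div (ha_lim.const_mul 2) (by norm_num)).mul hv_lim).mul hP_lim
    have t2 : Filter.Tendsto (fun ρ : ℝ => Real.sqrt (ρ/ρbar) * Real.sqrt (κ * ((ρ^γ - ρbar^γ)/(ρ - ρbar))) / 2)
        (nhdsWithin ρbar (Set.Ioi ρbar)) (nhds (1 * cbar / 2)) :=
      (ha_lim.mul hP_lim).div_const 2
    have t3 : Filter.Tendsto (fun ρ : ℝ => Real.sqrt (ρ/ρbar) * (κ * (γ * ρ^(γ-1))) / (2 * Real.sqrt (κ * ((ρ^γ - ρbar^γ)/(ρ - ρbar)))))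
        (nhdsWithin ρbar (Set.Ioi ρbar)) (nhds ((1 * (κ * (γ * ρbar^(γ-1)))) / (2 * cbar))) :=
      (ha_lim.mul hpow_lim).div (hP_lim.const_mul 2) (by positivity)
    have hsum := (t1.add t2).add t3
    have hL : 1/ρbar/(2*1) * 0 * cbar + 1 * cbar / 2 + (1 * (κ * (γ * ρbar^(γ-1)))) / (2 * cbar) = cbar := by
      have h2 : κ * (γ * ρbar^(γ-1)) = cbar ^ 2 := by rw [hcsq]; ring
      rw [h2]
      field_simp
      ring
    rw [hL] at hsum
    exact hsum
  -- derivative at ρbar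
  have hθbar : θ₂ ρbar = 0 := by rw [hθ]; simp
  have hleft : HasDerivWithinAt θ₂ cbar (Set.Iic ρbar) ρbar := by
    have h1 : HasDerivAt (fun x : ℝ => (2 * Real.sqrt (κ * γ) / (γ - 1)) * x * (x ^ ((γ-1)/2) - ρbar ^ ((γ-1)/2))) cbar ρbar := by
      have := hD1 ρbar hρbar
      rwa [hD1bar] at this
    refine h1.hasDerivWithinAt.congr ?_ ?_
    · intro y hy
      rw [hθ y, if_pos (Set.mem_Iic.1 hy)]
    · rw [hθ ρbar, if_pos le_rfl]
  have hright : HasDerivWithinAt θ₂ cbar (Set.Ioi ρbar) ρbar := by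
    rw [hasDerivWithinAt_iff_tendsto_slope]
    have hset : Set.Ioi ρbar \ {ρbar} = Set.Ioi ρbar := by
      ext x; simp (config := {contextual := true}) [ne_of_gt, LT.lt.ne']
    rw [hset]
    have key : ∀ ρ : ℝ, ρbar < ρ → slope θ₂ ρbar ρ =
        Real.sqrt ((ρ/ρbar) * (κ * ((ρ^γ - ρbar^γ)/(ρ - ρbar)))) := by
      intro ρ h
      have hv : 0 < ρ - ρbar := sub_pos.2 h
      have hρ0 : 0 < ρ := hρbar.trans h
      have hu : (0:ℝ) ≤ ρ/ρbar := div_nonneg hρ0.le hρbar.le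
      have hqnn : (0:ℝ) ≤ κ * ((ρ^γ - ρbar^γ)/(ρ - ρbar)) :=
        mul_nonneg hκ.le (div_nonneg (sub_nonneg.2 (Real.rpow_le_rpow hρbar.le h.le hγ0.le)) hv.le)
      rw [slope_def_field, hθbar, sub_zero, hθ ρ, if_neg (not_le.2 h)]
      have harg : (ρ/ρbar) * (ρ - ρbar) * (κ*ρ^γ - κ*ρbar^γ)
          = ((ρ/ρbar) * (κ * ((ρ^γ - ρbar^γ)/(ρ - ρbar)))) * (ρ - ρbar)^2 := by
        field_simp
      rw [harg, Real.sqrt_mul (mul_nonneg hu hqnn), Real.sqrt_sq hv.le, mul_div_assoc,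
        div_self hv.ne', mul_one]
    have hin_lim : Filter.Tendsto (fun ρ => (ρ/ρbar) * (κ * ((ρ^γ - ρbar^γ)/(ρ - ρbar))))
        (nhdsWithin ρbar (Set.Ioi ρbar)) (nhds (1 * (κ * (γ * ρbar^(γ-1))))) := by
      have hu : Filter.Tendsto (fun ρ : ℝ => ρ/ρbar) (nhdsWithin ρbar (Set.Ioi ρbar)) (nhds 1) := by
        have : Filter.Tendsto (fun ρ : ℝ => ρ/ρbar) (nhds ρbar) (nhds (ρbar/ρbar)) :=
          (continuous_id.div_const ρbar).continuousAt
        rw [div_self hρbar.ne'] at this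
        exact this.mono_left nhdsWithin_le_nhds
      exact hu.mul (hslope.const_mul κ)
    have hfin : Filter.Tendsto (fun ρ => Real.sqrt ((ρ/ρbar) * (κ * ((ρ^γ - ρbar^γ)/(ρ - ρbar)))))
        (nhdsWithin ρbar (Set.Ioi ρbar)) (nhds cbar) := by
      have := (Real.continuous_sqrt.tendsto _).comp hin_lim
      have hval : Real.sqrt (1 * (κ * (γ * ρbar^(γ-1)))) = cbar := by
        rw [hc]; congr 1; ring
      rw [hval] at this
      exact this
    refine hfin.congr' ?_
    filter_upwards [self_mem_nhdsWithin] with ρ hρ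
    exact (key ρ hρ).symm
  have hderivAt_bar : HasDerivAt θ₂ cbar ρbar := by
    have h := hleft.union hright
    rw [Set.Iic_union_Ioi] at h
    rwa [hasDerivWithinAt_univ] at h
  -- the global derivative function
  set D : ℝ → ℝ := fun ρ =>
    if ρ ≤ ρbar then
      (2 * Real.sqrt (κ * γ) / (γ - 1)) * ((1 + (γ-1)/2) * ρ ^ ((γ-1)/2) - ρbar ^ ((γ-1)/2))
    else
      1/ρbar/(2*Real.sqrt (ρ/ρbar)) * (ρ - ρbar) * Real.sqrt (κ * ((ρ^γ - ρbar^γ)/(ρ - ρbar)))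
        + Real.sqrt (ρ/ρbar) * Real.sqrt (κ * ((ρ^γ - ρbar^γ)/(ρ - ρbar))) / 2
        + Real.sqrt (ρ/ρbar) * (κ * (γ * ρ^(γ-1))) / (2 * Real.sqrt (κ * ((ρ^γ - ρbar^γ)/(ρ - ρbar))))
    with hD_def
  have hD : ∀ ρ ∈ Set.Ioi (0:ℝ), HasDerivAt θ₂ (D ρ) ρ := by
    intro ρ hρ
    simp only [Set.mem_Ioi] at hρ
    rcases lt_trichotomy ρ ρbar with h | h | h
    · have hev : θ₂ =ᶠ[nhds ρ]
          (fun x : ℝ => (2 * Real.sqrt (κ * γ) / (γ - 1)) * x * (x ^ ((γ-1)/2) - ρbar ^ ((γ-1)/2))) := by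
        filter_upwards [Iio_mem_nhds h] with x hx
        rw [hθ x, if_pos (le_of_lt hx)]
      have hd := (hD1 ρ hρ).congr_of_eventuallyEq hev
      simp only [hD_def]
      rw [if_pos h.le]
      exact hd
    · rw [h]
      simp only [hD_def]
      rw [if_pos le_rfl, hD1bar]
      exact hderivAt_bar
    · have hd := hD2 ρ h
      simp only [hD_def]
      rw [if_neg (not_le.2 h)]
      exact hd
  -- continuity of D on (0, ∞)
  have hRcont : ∀ ρ : ℝ, 0 < ρ → ContinuousAt
      (fun x : ℝ => (2 * Real.sqrt (κ * γ) / (γ - 1)) * ((1 + (γ-1)/2) * x ^ ((γ-1)/2) - ρbar ^ ((γ-1)/2))) ρ := by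
    intro ρ hρ
    have h1 : ContinuousAt (fun x : ℝ => x ^ ((γ-1)/2)) ρ :=
      Real.continuousAt_rpow_const ρ ((γ-1)/2) (Or.inl hρ.ne')
    exact continuousAt_const.mul (((h1.const_mul (1 + (γ-1)/2))).sub continuousAt_const)
  have hEcont : ∀ ρ : ℝ, ρbar < ρ → ContinuousAt
      (fun x : ℝ => 1/ρbar/(2*Real.sqrt (x/ρbar)) * (x - ρbar) * Real.sqrt (κ * ((x^γ - ρbar^γ)/(x - ρbar)))
        + Real.sqrt (x/ρbar) * Real.sqrt (κ * ((x^γ - ρbar^γ)/(x - ρbar))) / 2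
        + Real.sqrt (x/ρbar) * (κ * (γ * x^(γ-1))) / (2 * Real.sqrt (κ * ((x^γ - ρbar^γ)/(x - ρbar))))) ρ := by
    intro ρ h
    have hρ0 : 0 < ρ := hρbar.trans h
    have hv : 0 < ρ - ρbar := sub_pos.2 h
    have hvρ : 0 < ρ / ρbar := div_pos hρ0 hρbar
    have hq : 0 < (ρ^γ - ρbar^γ)/(ρ - ρbar) :=
      div_pos (sub_pos.2 (Real.rpow_lt_rpow hρbar.le h hγ0)) hv
    have ca : ContinuousAt (fun x : ℝ => Real.sqrt (x/ρbar)) ρ :=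
      (Real.continuous_sqrt.comp (continuous_id.div_const ρbar)).continuousAt
    have ca0 : Real.sqrt (ρ/ρbar) ≠ 0 := (Real.sqrt_pos.2 hvρ).ne'
    have cq : ContinuousAt (fun x : ℝ => κ * ((x^γ - ρbar^γ)/(x - ρbar))) ρ := by
      have h1 : ContinuousAt (fun x : ℝ => x ^ γ) ρ :=
        Real.continuousAt_rpow_const ρ γ (Or.inl hρ0.ne')
      exact ((h1.sub continuousAt_const).div
        (continuousAt_id.sub continuousAt_const) (sub_ne_zero.2 h.ne')).const_mul κ
    have cP : ContinuousAt (fun x : ℝ => Real.sqrt (κ * ((x^γ - ρbar^γ)/(x - ρbar)))) ρ :=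
      Real.continuous_sqrt.continuousAt.comp cq
    have cP0 : Real.sqrt (κ * ((ρ^γ - ρbar^γ)/(ρ - ρbar))) ≠ 0 :=
      (Real.sqrt_pos.2 (mul_pos hκ hq)).ne'
    have cpow : ContinuousAt (fun x : ℝ => κ * (γ * x^(γ-1))) ρ :=
      ((Real.continuousAt_rpow_const ρ (γ-1) (Or.inl hρ0.ne')).const_mul γ).const_mul κ
    have ht1 : ContinuousAt (fun x : ℝ =>
        1/ρbar/(2*Real.sqrt (x/ρbar)) * (x - ρbar) * Real.sqrt (κ * ((x^γ - ρbar^γ)/(x - ρbar)))) ρ :=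
      ((continuousAt_const.div (ca.const_mul 2) (by positivity)).mul
        (continuousAt_id.sub continuousAt_const)).mul cP
    have ht2 : ContinuousAt (fun x : ℝ =>
        Real.sqrt (x/ρbar) * Real.sqrt (κ * ((x^γ - ρbar^γ)/(x - ρbar))) / 2) ρ :=
      (ca.mul cP).div continuousAt_const (by norm_num)
    have ht3 : ContinuousAt (fun x : ℝ =>
        Real.sqrt (x/ρbar) * (κ * (γ * x^(γ-1))) / (2 * Real.sqrt (κ * ((x^γ - ρbar^γ)/(x - ρbar))))) ρ :=
      (ca.mul cpow).div (cP.const_mul 2) (by positivity)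
    exact (ht1.add ht2).add ht3
  have hDbar : D ρbar = cbar := by
    simp only [hD_def]
    rw [if_pos le_rfl, hD1bar]
  have hDcont : ContinuousOn D (Set.Ioi (0:ℝ)) := by
    intro ρ hρ
    simp only [Set.mem_Ioi] at hρ
    rcases lt_trichotomy ρ ρbar with h | h | h
    · have hev : (fun x : ℝ => (2 * Real.sqrt (κ * γ) / (γ - 1)) * ((1 + (γ-1)/2) * x ^ ((γ-1)/2) - ρbar ^ ((γ-1)/2)))
          =ᶠ[nhds ρ] D := by
        filter_upwards [Iio_mem_nhds h] with x hx
        simp only [hD_def]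
        rw [if_pos (le_of_lt hx)]
      exact ((hRcont ρ hρ).congr hev).continuousWithinAt
    · rw [h]
      have hIic : ContinuousWithinAt D (Set.Iic ρbar) ρbar := by
        refine ((hRcont ρbar hρbar).continuousWithinAt).congr ?_ ?_
        · intro y hy
          simp only [hD_def]
          rw [if_pos (Set.mem_Iic.1 hy)]
        · simp only [hD_def]
          rw [if_pos le_rfl]
      have hIoi : ContinuousWithinAt D (Set.Ioi ρbar) ρbar := by
        unfold ContinuousWithinAt
        rw [hDbar]
        refine hE_lim.congr' ?_
        filter_upwards [self_mem_nhdsWithin] with x hx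
        simp only [hD_def]
        rw [if_neg (not_le.2 hx)]
      have h := hIic.union hIoi
      rw [Set.Iic_union_Ioi] at h
      rw [continuousWithinAt_univ] at h
      exact h.continuousWithinAt
    · have hev : (fun x : ℝ => 1/ρbar/(2*Real.sqrt (x/ρbar)) * (x - ρbar) * Real.sqrt (κ * ((x^γ - ρbar^γ)/(x - ρbar)))
          + Real.sqrt (x/ρbar) * Real.sqrt (κ * ((x^γ - ρbar^γ)/(x - ρbar))) / 2
          + Real.sqrt (x/ρbar) * (κ * (γ * x^(γ-1))) / (2 * Real.sqrt (κ * ((x^γ - ρbar^γ)/(x - ρbar)))))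
          =ᶠ[nhds ρ] D := by
        filter_upwards [Ioi_mem_nhds h] with x hx
        simp only [hD_def]
        rw [if_neg (not_le.2 hx)]
      exact ((hEcont ρ h).congr hev).continuousWithinAt
  refine ⟨?_, hderivAt_bar⟩
  have hone : (1 : WithTop ℕ∞) = 0 + 1 := by norm_num
  rw [hone, contDiffOn_succ_iff_deriv_of_isOpen isOpen_Ioi]
  refine ⟨?_, ?_, ?_⟩
  · intro ρ hρ
    exact (hD ρ hρ).differentiableAt.differentiableWithinAt
  · simp
  · rw [contDiffOn_zero]
    exact hDcont.congr (fun ρ hρ => (hD ρ hρ).deriv)
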